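/- For every even integer n ≥ 2, the image in Tₙ of the basis element [n/2] equals −2 times the image of the element [1] + [2] + ⋯ + [n/2 − 1]. -/
import Mathlib


noncomputable section

/-- The basis element `[k]` of the free abelian group `ℤ[ℤ]`. -/
def e (k : ℤ) : ℤ →₀ ℤ := Finsupp.single k 1

/-- The additive subgroup of `ℤ[ℤ]` generated by all `[k] − [k+n]`,
all `[k] − [−k]`, the element `[0]`, and all sums `[m] + [m+1] + ⋯ + [m+n−1]`. -/
def tRel (n : ℕ) : AddSubgroup (ℤ →₀ ℤ) :=
  AddSubgroup.closure
    ({v | ∃ k : ℤ, v = e k - e (k + n)} ∪ {v | ∃ k : ℤ, v = e k - e (-k)} ∪ {e 0}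
      ∪ {v | ∃ m : ℤ, v = ∑ i ∈ Finset.range n, e (m + i)})

/-- The group `Tₙ`. -/
abbrev T (n : ℕ) := (ℤ →₀ ℤ) ⧸ tRel n

theorem stmt12 (n : ℕ) (heven : Even n) (hn : 2 ≤ n) :
    (QuotientAddGroup.mk (e ((n / 2 : ℕ) : ℤ)) : T n) =
      -(2 • (QuotientAddGroup.mk (∑ i ∈ Finset.range (n / 2 - 1), e ((i : ℤ) + 1)) : T n)) := by
  set f : ℤ → T n := fun k => (QuotientAddGroup.mk (e k) : T n) with hf
  have hmk : ∀ (s : Finset ℕ) (g : ℕ → ℤ),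
      (QuotientAddGroup.mk (∑ i ∈ s, e (g i)) : T n) = ∑ i ∈ s, f (g i) := fun s g =>
    map_sum (QuotientAddGroup.mk' (tRel n)) _ _
  have h1 : ∀ k : ℤ, f k = f (k + n) := by
    intro k
    refine (QuotientAddGroup.eq_iff_sub_mem).2 ?_
    exact AddSubgroup.subset_closure (by left; left; left; exact ⟨k, rfl⟩)
  have h2 : ∀ k : ℤ, f k = f (-k) := by
    intro k
    refine (QuotientAddGroup.eq_iff_sub_mem).2 ?_
    exact AddSubgroup.subset_closure (by left; left; right; exact ⟨k, rfl⟩)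
  have h3 : ∀ m : ℤ, (QuotientAddGroup.mk (∑ i ∈ Finset.range n, e (m + i)) : T n) = 0 := by
    intro m
    refine (QuotientAddGroup.eq_zero_iff _).2 ?_
    exact AddSubgroup.subset_closure (by right; exact ⟨m, rfl⟩)
  set h := n / 2 with hh
  obtain ⟨m, hm⟩ := heven
  have hn2 : n = h + h := by omega
  have hh1 : 1 ≤ h := by omega
  -- the key relation
  have key : ∑ i ∈ Finset.range n, f (1 + (i : ℤ)) = 0 := by
    rw [← hmk]; exact h3 1
  have hrange : Finset.range n = Finset.range (h + h) := by rw [← hn2]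
  rw [hrange, Finset.sum_range_add] at key
  -- second half transforms
  have second : ∀ i ∈ Finset.range h, f (1 + ((h + i : ℕ) : ℤ)) = f ((h - 1 - i : ℕ) : ℤ) := by
    intro i hi
    have hi' : i < h := Finset.mem_range.1 hi
    have e1 : (1 + ((h + i : ℕ) : ℤ)) = (1 + (i : ℤ) - h) + n := by
      rw [hn2]; push_cast; ring
    have e2 : ((h - 1 - i : ℕ) : ℤ) = -(1 + (i : ℤ) - h) := by omega
    rw [e1, ← h1, e2, ← h2]
  rw [Finset.sum_congr rfl second, Finset.sum_range_reflect (fun j => f (j : ℤ)) h] at key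
  -- split both halves
  set S := ∑ i ∈ Finset.range (h - 1), f ((i : ℤ) + 1) with hS
  have first : ∑ i ∈ Finset.range h, f (1 + (i : ℤ)) = S + f (h : ℤ) := by
    have : h = (h - 1) + 1 := by omega
    rw [this, Finset.sum_range_succ]
    congr 1
    · exact Finset.sum_congr rfl fun i _ => by rw [add_comm]
    · congr 1; omega
  have secondsum : ∑ j ∈ Finset.range h, f (j : ℤ) = S := by
    have hrw : h = (h - 1) + 1 := by omega
    rw [hrw, Finset.sum_range_succ']
    have h0 : f ((0 : ℕ) : ℤ) = 0 := by
      refine (QuotientAddGroup.eq_zero_iff _).2 ?_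
      exact AddSubgroup.subset_closure (by left; right; simp)
    rw [h0, add_zero]
    exact Finset.sum_congr rfl fun i _ => by push_cast; ring_nf
  rw [first, secondsum] at key
  rw [hmk, ← hS]
  have : f (h : ℤ) + (S + S) = 0 := by rw [← key]; abel
  rw [two_nsmul]
  exact eq_neg_of_add_eq_zero_left this
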